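/- For sign sequences X and Y, define X < Y iff one of: (1) X is simpler than Y and Y(dom X) = +; (2) Y is simpler than X and X(dom Y) = −; (3) there is a sign sequence Z simpler than both X and Y with X(dom Z) = − and Y(dom Z) = +. Then < is a strict total order on sign sequences: it is irreflexive, transitive, and any two distinct sign sequences are comparable. -/

import Mathlib

/-- A sign sequence: a "function" from the ordinal `dom` to `Bool`
(`true` = `+`, `false` = `-`); only values of `val` below `dom` are relevant. -/
structure SignSeq where
  dom : Ordinal
  val : Ordinal → Bool

/-- `X` is simpler than `Y`. -/
def Simpler (X Y : SignSeq) : Prop :=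
  X.dom < Y.dom ∧ ∀ β < X.dom, X.val β = Y.val β

/-- The sign-expansion order on sign sequences. -/
def SLt (X Y : SignSeq) : Prop :=
  (Simpler X Y ∧ Y.val X.dom = true) ∨
  (Simpler Y X ∧ X.val Y.dom = false) ∨
  (∃ Z : SignSeq, Simpler Z X ∧ Simpler Z Y ∧ X.val Z.dom = false ∧ Y.val Z.dom = true)

/-- Extensional equality of sign sequences: same domain and same signs below it. -/
def ExtEq (X Y : SignSeq) : Prop :=
  X.dom = Y.dom ∧ ∀ β < X.dom, X.val β = Y.val β

/-- `limsup` of the domains of a sequence of sign sequences. -/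
noncomputable def limsupDom (X : ℕ → SignSeq) : Ordinal :=
  ⨅ n : ℕ, ⨆ m : ℕ, (X (n + m)).dom

/-- The limit birthday: least limit ordinal `≥ limsup` of the domains. -/
noncomputable def limitBirthday (X : ℕ → SignSeq) : Ordinal :=
  sInf {α : Ordinal | limsupDom X ≤ α ∧ Order.IsSuccLimit α}

/-- Convergence of a sequence of sign sequences to `L`. -/
def ConvergesTo (X : ℕ → SignSeq) (L : SignSeq) : Prop :=
  L.dom ≤ limitBirthday X ∧
  ∀ α < limitBirthday X, ∃ n₀ : ℕ, ∀ n > n₀,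
    ∀ β < min α (min (X n).dom L.dom), (X n).val β = L.val β

/-- The natural number `n` as `n` pluses. -/
def natSeq (n : ℕ) : SignSeq := ⟨(n : Ordinal), fun _ => true⟩

/-- `ω` as `ω` pluses. -/
noncomputable def omegaSeq : SignSeq := ⟨Ordinal.omega0, fun _ => true⟩

/-- Auxiliary: the sign at `β`, as an integer (`0` outside the domain). -/
noncomputable def sgn (X : SignSeq) (β : Ordinal) : ℤ :=
  if β < X.dom then (if X.val β then 1 else -1) else 0

/-- Witness characterization of `SLt`. -/
def Wit (X Y : SignSeq) : Prop :=
  ∃ δ : Ordinal, (∀ β < δ, sgn X β = sgn Y β) ∧ sgn X δ < sgn Y δ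

lemma sgn_eq_val {X Y : SignSeq} {β : Ordinal} (hx : β < X.dom) (hy : β < Y.dom)
    (h : sgn X β = sgn Y β) : X.val β = Y.val β := by
  unfold sgn at h
  rw [if_pos hx, if_pos hy] at h
  cases hX : X.val β <;> cases hY : Y.val β <;> simp_all

lemma sgn_ne_zero {X : SignSeq} {β : Ordinal} (hx : β < X.dom) : sgn X β ≠ 0 := by
  unfold sgn; rw [if_pos hx]; cases X.val β <;> simp

lemma sgn_eq_zero {X : SignSeq} {β : Ordinal} (hx : ¬ β < X.dom) : sgn X β = 0 := by
  unfold sgn; rw [if_neg hx]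

lemma slt_of_wit {X Y : SignSeq} (h : Wit X Y) : SLt X Y := by
  obtain ⟨δ, h1, h2⟩ := h
  by_cases hx : δ < X.dom <;> by_cases hy : δ < Y.dom
  · -- both defined at δ: case 3
    have hxv : X.val δ = false := by
      by_contra hc
      simp only [Bool.not_eq_false] at hc
      simp only [sgn, if_pos hx, if_pos hy, hc, if_true] at h2
      split at h2 <;> omega
    have hyv : Y.val δ = true := by
      by_contra hc
      simp only [Bool.not_eq_true] at hc
      simp [sgn, if_pos hx, if_pos hy, hxv, hc] at h2
    refine Or.inr (Or.inr ⟨⟨δ, X.val⟩, ⟨hx, fun β _ => rfl⟩, ⟨hy, ?_⟩, hxv, hyv⟩)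
    intro β hβ
    have hβ' : β < δ := hβ
    show X.val β = Y.val β
    exact sgn_eq_val (hβ'.trans hx) (hβ'.trans hy) (h1 β hβ')
  · -- δ = Y.dom < X.dom : case 2
    have hδ : δ = Y.dom := by
      rcases lt_or_eq_of_le (le_of_not_gt hy) with h' | h'
      · exact absurd ((h1 Y.dom h').trans (sgn_eq_zero (lt_irrefl Y.dom)))
          (sgn_ne_zero (h'.trans hx))
      · exact h'.symm
    have hxv : X.val δ = false := by
      by_contra hc
      simp only [Bool.not_eq_false] at hc
      simp [sgn, if_pos hx, if_neg hy, hc] at h2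
    subst hδ
    exact Or.inr (Or.inl ⟨⟨hx, fun β hβ =>
      (sgn_eq_val (hβ.trans hx) hβ (h1 β hβ)).symm⟩, hxv⟩)
  · -- δ = X.dom < Y.dom : case 1
    have hδ : δ = X.dom := by
      rcases lt_or_eq_of_le (le_of_not_gt hx) with h' | h'
      · exact absurd ((h1 X.dom h').symm.trans (sgn_eq_zero (lt_irrefl X.dom)))
          (sgn_ne_zero (h'.trans hy))
      · exact h'.symm
    have hyv : Y.val δ = true := by
      by_contra hc
      simp only [Bool.not_eq_true] at hc
      simp [sgn, if_neg hx, if_pos hy, hc] at h2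
    subst hδ
    exact Or.inl ⟨⟨hy, fun β hβ => sgn_eq_val hβ (hβ.trans hy) (h1 β hβ)⟩, hyv⟩
  · rw [sgn_eq_zero hx, sgn_eq_zero hy] at h2; omega

lemma wit_of_slt {X Y : SignSeq} (h : SLt X Y) : Wit X Y := by
  rcases h with ⟨⟨hd, hv⟩, ht⟩ | ⟨⟨hd, hv⟩, ht⟩ | ⟨Z, ⟨hdx, hvx⟩, ⟨hdy, hvy⟩, hf, ht⟩
  · refine ⟨X.dom, fun β hβ => ?_, ?_⟩
    · unfold sgn; rw [if_pos hβ, if_pos (hβ.trans hd), hv β hβ]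
    · simp [sgn, lt_irrefl, if_pos hd, ht]
  · refine ⟨Y.dom, fun β hβ => ?_, ?_⟩
    · unfold sgn; rw [if_pos hβ, if_pos (hβ.trans hd), hv β hβ]
    · simp [sgn, lt_irrefl, if_pos hd, ht]
  · refine ⟨Z.dom, fun β hβ => ?_, ?_⟩
    · unfold sgn
      rw [if_pos (hβ.trans hdx), if_pos (hβ.trans hdy), ← hvx β hβ, ← hvy β hβ]
    · simp [sgn, if_pos hdx, if_pos hdy, hf, ht]

lemma wit_trans {X Y Z : SignSeq} (h1 : Wit X Y) (h2 : Wit Y Z) : Wit X Z := by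
  obtain ⟨δ₁, a1, b1⟩ := h1
  obtain ⟨δ₂, a2, b2⟩ := h2
  rcases lt_trichotomy δ₁ δ₂ with h | h | h
  · exact ⟨δ₁, fun β hβ => (a1 β hβ).trans (a2 β (hβ.trans h)), (a2 δ₁ h) ▸ b1⟩
  · subst h
    exact ⟨δ₁, fun β hβ => (a1 β hβ).trans (a2 β hβ), b1.trans b2⟩
  · exact ⟨δ₂, fun β hβ => (a1 β (hβ.trans h)).trans (a2 β hβ),
      lt_of_le_of_lt (le_of_eq (a1 δ₂ h)) b2⟩

/-- The sign-expansion order is a strict total order: irreflexive, transitive,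
and any two (extensionally) distinct sign sequences are comparable. -/
theorem slt_strict_total_order :
    (∀ X : SignSeq, ¬ SLt X X) ∧
    (∀ X Y Z : SignSeq, SLt X Y → SLt Y Z → SLt X Z) ∧
    (∀ X Y : SignSeq, ¬ ExtEq X Y → SLt X Y ∨ SLt Y X) := by
  refine ⟨fun X h => ?_, fun X Y Z h1 h2 => ?_, fun X Y h => ?_⟩
  · obtain ⟨δ, _, hlt⟩ := wit_of_slt h
    exact lt_irrefl _ hlt
  · exact slt_of_wit (wit_trans (wit_of_slt h1) (wit_of_slt h2))
  · have hne : ∃ δ : Ordinal, sgn X δ ≠ sgn Y δ := by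
      by_contra hc
      push_neg at hc
      apply h
      have hdom : X.dom = Y.dom := by
        by_contra hd
        rcases lt_or_gt_of_ne hd with h' | h'
        · exact sgn_ne_zero h' (((hc X.dom).symm.trans (sgn_eq_zero (lt_irrefl X.dom))).symm ▸ rfl)
        · exact sgn_ne_zero h' ((hc Y.dom).trans (sgn_eq_zero (lt_irrefl Y.dom)))
      exact ⟨hdom, fun β hβ => sgn_eq_val hβ (hdom ▸ hβ) (hc β)⟩
    classical
    obtain ⟨δ, hδmem, hδmin⟩ := wellFounded_lt.has_min {δ : Ordinal | sgn X δ ≠ sgn Y δ} hne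
    have hagree : ∀ β < δ, sgn X β = sgn Y β := fun β hβ => by
      by_contra hc; exact hδmin β hc hβ
    rcases lt_or_gt_of_ne hδmem with h' | h'
    · exact Or.inl (slt_of_wit ⟨δ, hagree, h'⟩)
    · exact Or.inr (slt_of_wit ⟨δ, fun β hβ => (hagree β hβ).symm, h'⟩)
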